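/- arXiv:math/0509281 — 3 statements merged into one kernel-verified Lean document; each statement's English description precedes it below -/
import Mathlib

section
/- For complex numbers $a, z, q$ with $|q| < 1$ and $|z| < 1$, the $q$-binomial theorem holds: $\sum_{k=0}^\infty \frac{(a;q)_k}{(q;q)_k} z^k = \frac{(az;q)_\infty}{(z;q)_\infty}$. -/
noncomputable def qPoch (a q : ℂ) (n : ℕ) : ℂ := ∏ j ∈ Finset.range n, (1 - a * q ^ j)

noncomputable def qPochInf (a q : ℂ) : ℂ := ∏' j : ℕ, (1 - a * q ^ j)

open Filter Finset Complex Topology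

private lemma one_sub_ne {w : ℂ} (hw : ‖w‖ < 1) : 1 - w ≠ 0 := by
  rw [sub_ne_zero]
  intro h
  rw [← h] at hw
  simp at hw

private lemma abs_mul_pow_lt {q w : ℂ} (hq : ‖q‖ < 1) (hw : ‖w‖ < 1)
    (j : ℕ) : ‖w * q ^ j‖ < 1 := by
  rw [norm_mul, norm_pow]
  calc ‖w‖ * ‖q‖ ^ j
      ≤ ‖w‖ * 1 := by
        refine mul_le_mul_of_nonneg_left ?_ (norm_nonneg w)
        exact pow_le_one₀ (norm_nonneg q) hq.le
    _ = ‖w‖ := mul_one _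
    _ < 1 := hw

private lemma qPoch_q_ne_zero {q : ℂ} (hq : ‖q‖ < 1) (k : ℕ) : qPoch q q k ≠ 0 := by
  refine Finset.prod_ne_zero_iff.mpr fun j _ => ?_
  exact one_sub_ne (abs_mul_pow_lt hq hq j)

private lemma summable_log_one_sub (w q : ℂ) (hq : ‖q‖ < 1) :
    Summable fun j : ℕ => Complex.log (1 - w * q ^ j) := by
  have hgeo : Summable fun j : ℕ => 3 / 2 * (‖w‖ * ‖q‖ ^ j) :=
    ((summable_geometric_of_lt_one (norm_nonneg q) hq).mul_left _).mul_left _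
  refine Summable.of_norm_bounded_eventually_nat hgeo ?_
  have h0 : Tendsto (fun j : ℕ => ‖w‖ * ‖q‖ ^ j) atTop (𝓝 0) := by
    have := tendsto_pow_atTop_nhds_zero_of_lt_one (norm_nonneg q) hq
    simpa using this.const_mul (‖w‖)
  filter_upwards [h0.eventually_lt_const (by norm_num : (0 : ℝ) < 1 / 2)] with j hj
  have habs : ‖-(w * q ^ j)‖ ≤ 1 / 2 := by
    rw [norm_neg, norm_mul, norm_pow]
    exact hj.le
  have := Complex.norm_log_one_add_half_le_self habs
  rw [← sub_eq_add_neg] at this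
  refine this.trans ?_
  rw [norm_neg, norm_mul, norm_pow]

private lemma hasProd_qPochInf (w q : ℂ) (hq : ‖q‖ < 1) :
    HasProd (fun j : ℕ => 1 - w * q ^ j) (qPochInf w q) := by
  by_cases h : ∀ j : ℕ, 1 - w * q ^ j ≠ 0
  · exact (Complex.hasProd_of_hasSum_log (fun j => h j)
      (summable_log_one_sub w q hq).hasSum).multipliable.hasProd
  · push_neg at h
    obtain ⟨j0, hj0⟩ := h
    have h0 : HasProd (fun j : ℕ => 1 - w * q ^ j) 0 := by
      have he : ∀ᶠ s : Finset ℕ in atTop, ∏ i ∈ s, (1 - w * q ^ i) = 0 := by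
        filter_upwards [eventually_ge_atTop ({j0} : Finset ℕ)] with s hs
        exact Finset.prod_eq_zero (hs (Finset.mem_singleton_self j0)) hj0
      exact Tendsto.congr' (he.mono fun s hs => hs.symm) tendsto_const_nhds
    have h1 : qPochInf w q = 0 := h0.tprod_eq
    rw [h1]
    exact h0

private lemma qPochInf_ne_zero {w q : ℂ} (hq : ‖q‖ < 1) (hw : ‖w‖ < 1) :
    qPochInf w q ≠ 0 := by
  have h2 := Complex.cexp_tsum_eq_tprod (f := fun j => 1 - w * q ^ j)
    (fun j => one_sub_ne (abs_mul_pow_lt hq hw j)) (summable_log_one_sub w q hq)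
  rw [qPochInf, ← h2]
  exact Complex.exp_ne_zero _

private lemma summable_term (a q : ℂ) (hq : ‖q‖ < 1) {w : ℂ}
    (hw : ‖w‖ < 1) :
    Summable fun k : ℕ => qPoch a q k / qPoch q q k * w ^ k := by
  set r := (1 + ‖w‖) / 2 with hr
  have hr1 : r < 1 := by rw [hr]; linarith
  refine summable_of_ratio_norm_eventually_le hr1 ?_
  have hq0 : Tendsto (fun k : ℕ => q ^ k) atTop (𝓝 0) :=
    tendsto_pow_atTop_nhds_zero_of_norm_lt_one hq
  have hcontAt : ContinuousAt (fun x : ℂ => ‖(1 - a * x) / (1 - q * x) * w‖) 0 := by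
    refine continuous_norm.continuousAt.comp ?_
    refine ContinuousAt.mul (ContinuousAt.div ?_ ?_ ?_) continuousAt_const
    · exact continuousAt_const.sub (continuousAt_const.mul continuousAt_id)
    · exact continuousAt_const.sub (continuousAt_const.mul continuousAt_id)
    · simp
  have hcont : Tendsto (fun k : ℕ => ‖(1 - a * q ^ k) / (1 - q * q ^ k) * w‖)
      atTop (𝓝 (‖w‖)) := by
    have := hcontAt.tendsto.comp hq0
    simpa [Function.comp_def] using this
  have hltr : ‖w‖ < r := by rw [hr]; linarith
  filter_upwards [hcont.eventually_lt_const hltr] with k hk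
  have hQ : qPoch q q k ≠ 0 := qPoch_q_ne_zero hq k
  have hQ1 : (1 : ℂ) - q * q ^ k ≠ 0 := one_sub_ne (abs_mul_pow_lt hq hq k)
  have hfe : qPoch a q (k + 1) / qPoch q q (k + 1) * w ^ (k + 1)
      = qPoch a q k / qPoch q q k * w ^ k * ((1 - a * q ^ k) / (1 - q * q ^ k) * w) := by
    have h1 : qPoch a q (k + 1) = qPoch a q k * (1 - a * q ^ k) := Finset.prod_range_succ _ _
    have h2 : qPoch q q (k + 1) = qPoch q q k * (1 - q * q ^ k) := Finset.prod_range_succ _ _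
    rw [h1, h2]
    field_simp
    ring
  rw [hfe, norm_mul, mul_comm r _]
  refine mul_le_mul_of_nonneg_left ?_ (norm_nonneg _)
  exact hk.le

private lemma funceq (a q : ℂ) (hq : ‖q‖ < 1) {w : ℂ} (hw : ‖w‖ < 1) :
    (1 - w) * ∑' k : ℕ, qPoch a q k / qPoch q q k * w ^ k
      = (1 - a * w) * ∑' k : ℕ, qPoch a q k / qPoch q q k * (q * w) ^ k := by
  set c : ℕ → ℂ := fun k => qPoch a q k / qPoch q q k with hc
  have hqw : ‖q * w‖ < 1 := by
    rw [norm_mul]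
    calc ‖q‖ * ‖w‖ ≤ 1 * ‖w‖ :=
          mul_le_mul_of_nonneg_right hq.le (norm_nonneg w)
      _ = ‖w‖ := one_mul _
      _ < 1 := hw
  have S1 : Summable fun k => c k * w ^ k := summable_term a q hq hw
  have S2 : Summable fun k => c k * (q * w) ^ k := summable_term a q hq hqw
  have hrec : ∀ k : ℕ, c (k + 1) * (1 - q ^ (k + 1)) = c k * (1 - a * q ^ k) := by
    intro k
    have h1 : qPoch a q (k + 1) = qPoch a q k * (1 - a * q ^ k) := Finset.prod_range_succ _ _
    have h2 : qPoch q q (k + 1) = qPoch q q k * (1 - q * q ^ k) := Finset.prod_range_succ _ _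
    have hQ : qPoch q q k ≠ 0 := qPoch_q_ne_zero hq k
    have hQ1 : (1 : ℂ) - q * q ^ k ≠ 0 := one_sub_ne (abs_mul_pow_lt hq hq k)
    rw [hc]
    simp only
    rw [h1, h2, pow_succ']
    rw [div_mul_eq_mul_div, mul_div_mul_right _ _ hQ1]
    ring
  have T1 : Summable fun k => c k * (1 - q ^ k) * w ^ k := by
    refine (S1.sub S2).congr fun k => by ring
  have T2 : Summable fun k => c k * (1 - a * q ^ k) * w ^ (k + 1) := by
    refine ((S1.sub (S2.mul_left a)).mul_right w).congr fun k => by ring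
  have key : (∑' k : ℕ, c k * (1 - q ^ k) * w ^ k)
      = ∑' k : ℕ, c k * (1 - a * q ^ k) * w ^ (k + 1) := by
    rw [T1.tsum_eq_zero_add]
    have h0 : c 0 * (1 - q ^ 0) * w ^ 0 = 0 := by simp
    rw [h0, zero_add]
    exact tsum_congr fun k => by rw [hrec k]
  rw [← tsum_mul_left, ← tsum_mul_left, ← sub_eq_zero,
    ← Summable.tsum_sub (S1.mul_left (1 - w)) (S2.mul_left (1 - a * w))]
  have e : (∑' k : ℕ, ((1 - w) * (c k * w ^ k) - (1 - a * w) * (c k * (q * w) ^ k)))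
      = ∑' k : ℕ, (c k * (1 - q ^ k) * w ^ k - c k * (1 - a * q ^ k) * w ^ (k + 1)) :=
    tsum_congr fun k => by rw [mul_pow]; ring
  rw [e, T1.tsum_sub T2, key, sub_self]

theorem q_binomial (a z q : ℂ) (hq : ‖q‖ < 1) (hz : ‖z‖ < 1) :
    ∑' k : ℕ, qPoch a q k / qPoch q q k * z ^ k = qPochInf (a * z) q / qPochInf z q := by
  set c : ℕ → ℂ := fun k => qPoch a q k / qPoch q q k with hc
  set G : ℂ → ℂ := fun w => ∑' k : ℕ, c k * w ^ k with hG
  have habsw : ∀ n : ℕ, ‖q ^ n * z‖ < 1 := by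
    intro n
    rw [norm_mul, norm_pow]
    calc ‖q‖ ^ n * ‖z‖ ≤ 1 * ‖z‖ := by
          refine mul_le_mul_of_nonneg_right ?_ (norm_nonneg z)
          exact pow_le_one₀ (norm_nonneg q) hq.le
      _ = ‖z‖ := one_mul _
      _ < 1 := hz
  -- the iteration identity
  have step : ∀ n : ℕ, G z * ∏ j ∈ Finset.range n, (1 - z * q ^ j)
      = (∏ j ∈ Finset.range n, (1 - a * z * q ^ j)) * G (q ^ n * z) := by
    intro n
    induction n with
    | zero => simp
    | succ n ih =>
      rw [Finset.prod_range_succ, Finset.prod_range_succ, ← mul_assoc, ih]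
      have hfe := funceq a q hq (habsw n)
      have h1 : (1 : ℂ) - q ^ n * z = 1 - z * q ^ n := by ring
      have h2 : (1 : ℂ) - a * (q ^ n * z) = 1 - a * z * q ^ n := by ring
      have h3 : q * (q ^ n * z) = q ^ (n + 1) * z := by ring
      rw [h1, h2, h3] at hfe
      calc (∏ j ∈ Finset.range n, (1 - a * z * q ^ j)) * G (q ^ n * z) * (1 - z * q ^ n)
          = (∏ j ∈ Finset.range n, (1 - a * z * q ^ j)) *
              ((1 - z * q ^ n) * G (q ^ n * z)) := by ring
        _ = (∏ j ∈ Finset.range n, (1 - a * z * q ^ j)) *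
              ((1 - a * z * q ^ n) * G (q ^ (n + 1) * z)) := by rw [hfe]
        _ = (∏ j ∈ Finset.range n, (1 - a * z * q ^ j)) * (1 - a * z * q ^ n) *
              G (q ^ (n + 1) * z) := by ring
  -- limits
  have hP : Tendsto (fun n : ℕ => ∏ j ∈ Finset.range n, (1 - z * q ^ j)) atTop
      (𝓝 (qPochInf z q)) := (hasProd_qPochInf z q hq).tendsto_prod_nat
  have hQ : Tendsto (fun n : ℕ => ∏ j ∈ Finset.range n, (1 - a * z * q ^ j)) atTop
      (𝓝 (qPochInf (a * z) q)) := by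
    have := (hasProd_qPochInf (a * z) q hq).tendsto_prod_nat
    simpa [mul_assoc] using this
  -- G (q^n z) → 1
  have hSz : Summable fun k : ℕ => c k * z ^ k := summable_term a q hq hz
  have hn1 : Summable fun k : ℕ => ‖c k * z ^ k‖ := summable_norm_iff.mpr hSz
  have hSz' : Summable fun k : ℕ => ‖c (k + 1) * z ^ (k + 1)‖ :=
    (summable_nat_add_iff (f := fun k : ℕ => ‖c k * z ^ k‖) 1).mpr hn1
  set T : ℝ := ∑' k : ℕ, ‖c (k + 1) * z ^ (k + 1)‖ with hT
  have hGlim : Tendsto (fun n : ℕ => G (q ^ n * z)) atTop (𝓝 1) := by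
    rw [← tendsto_sub_nhds_zero_iff]
    have hbound : ∀ n : ℕ, ‖G (q ^ n * z) - 1‖ ≤ ‖q‖ ^ n * T := by
      intro n
      have hS : Summable fun k : ℕ => c k * (q ^ n * z) ^ k := summable_term a q hq (habsw n)
      have hS1 : Summable fun k : ℕ => c (k + 1) * (q ^ n * z) ^ (k + 1) :=
        (summable_nat_add_iff (f := fun k : ℕ => c k * (q ^ n * z) ^ k) 1).mpr hS
      have hS1n : Summable fun k : ℕ => ‖c (k + 1) * (q ^ n * z) ^ (k + 1)‖ :=
        summable_norm_iff.mpr hS1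
      have hGe : G (q ^ n * z) - 1 = ∑' k : ℕ, c (k + 1) * (q ^ n * z) ^ (k + 1) := by
        rw [hG]
        simp only
        rw [hS.tsum_eq_zero_add]
        have hc0 : c 0 * (q ^ n * z) ^ 0 = 1 := by simp [hc, qPoch]
        rw [hc0]
        ring
      rw [hGe]
      refine (norm_tsum_le_tsum_norm hS1n).trans ?_
      have hterm : ∀ k : ℕ, ‖c (k + 1) * (q ^ n * z) ^ (k + 1)‖
          ≤ ‖q‖ ^ n * ‖c (k + 1) * z ^ (k + 1)‖ := by
        intro k
        have he : c (k + 1) * (q ^ n * z) ^ (k + 1)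
            = q ^ (n * (k + 1)) * (c (k + 1) * z ^ (k + 1)) := by
          rw [mul_pow, ← pow_mul]
          ring
        rw [he, norm_mul]
        refine mul_le_mul_of_nonneg_right ?_ (norm_nonneg _)
        rw [norm_pow]
        refine pow_le_pow_of_le_one (norm_nonneg q) hq.le ?_
        exact Nat.le_mul_of_pos_right n (Nat.succ_pos k)
      calc (∑' k : ℕ, ‖c (k + 1) * (q ^ n * z) ^ (k + 1)‖)
          ≤ ∑' k : ℕ, ‖q‖ ^ n * ‖c (k + 1) * z ^ (k + 1)‖ :=
            Summable.tsum_le_tsum hterm hS1n (hSz'.mul_left _)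
        _ = ‖q‖ ^ n * T := by rw [tsum_mul_left]
    refine squeeze_zero_norm hbound ?_
    have h1 : Tendsto (fun n : ℕ => ‖q‖ ^ n) atTop (𝓝 0) :=
      tendsto_pow_atTop_nhds_zero_of_lt_one (norm_nonneg q) hq
    simpa using h1.mul_const T
  -- combine
  have hLHS : Tendsto (fun n : ℕ => G z * ∏ j ∈ Finset.range n, (1 - z * q ^ j)) atTop
      (𝓝 (G z * qPochInf z q)) := hP.const_mul _
  have hRHS : Tendsto (fun n : ℕ => (∏ j ∈ Finset.range n, (1 - a * z * q ^ j)) *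
      G (q ^ n * z)) atTop (𝓝 (qPochInf (a * z) q * 1)) := hQ.mul hGlim
  have heq : G z * qPochInf z q = qPochInf (a * z) q * 1 :=
    tendsto_nhds_unique ((hLHS.congr fun n => step n)) hRHS
  rw [mul_one] at heq
  have hne : qPochInf z q ≠ 0 := qPochInf_ne_zero hq hz
  show G z = qPochInf (a * z) q / qPochInf z q
  rw [eq_div_iff hne]
  exact heq
end

section
/- Jacobi's triple product identity: for $0<|q|<1$ and $z \neq 0$, $\sum_{k=-\infty}^\infty q^{\binom{k}{2}} z^k = (q;q)_\infty \, (-z;q)_\infty \, (-q/z;q)_\infty$. -/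
open Filter Topology Finset


open Filter Topology

lemma hasProd_zero_of_zero {f : ℕ → ℂ} (j₀ : ℕ) (h : f j₀ = 0) : HasProd f 0 := by
  have : ∀ᶠ s in (atTop : Filter (Finset ℕ)), ∏ i ∈ s, f i = 0 := by
    filter_upwards [Filter.eventually_ge_atTop {j₀}] with s hs
    exact Finset.prod_eq_zero (hs (Finset.mem_singleton_self j₀)) h
  exact Tendsto.congr' (by filter_upwards [this] with s hs; exact hs.symm) tendsto_const_nhds

lemma multipliable_one_sub (a q : ℂ) (hq : ‖q‖ < 1) :
    Multipliable (fun j : ℕ => 1 - a * q ^ j) := by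
  by_cases hex : ∃ j, 1 - a * q ^ j = 0
  · obtain ⟨j, hj⟩ := hex
    exact ⟨0, hasProd_zero_of_zero j hj⟩
  · push_neg at hex
    refine Complex.multipliable_of_summable_log ?_
    have hs : Summable (fun j : ℕ => (3/2 : ℝ) * (‖a‖ * ‖q‖ ^ j)) :=
      ((summable_geometric_of_lt_one (norm_nonneg q) hq).mul_left _).mul_left _
    refine Summable.of_norm_bounded_eventually_nat hs ?_
    have h0 : Tendsto (fun j : ℕ => ‖a‖ * ‖q‖ ^ j) atTop (𝓝 0) := by
      simpa using (tendsto_pow_atTop_nhds_zero_of_lt_one (norm_nonneg q) hq).const_mul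
        (‖a‖)
    filter_upwards [h0.eventually_le_const (by norm_num : (0:ℝ) < 1/2)] with j hj
    have : ‖(-(a * q ^ j) : ℂ)‖ ≤ 1/2 := by
      simpa [map_mul, map_pow] using hj
    calc ‖Complex.log (1 - a * q ^ j)‖ = ‖Complex.log (1 + -(a * q ^ j))‖ := by
          ring_nf
      _ ≤ 3/2 * ‖(-(a * q ^ j) : ℂ)‖ := Complex.norm_log_one_add_half_le_self this
      _ = 3/2 * (‖a‖ * ‖q‖ ^ j) := by
          simp [map_mul, map_pow]

lemma tendsto_qPoch (a q : ℂ) (hq : ‖q‖ < 1) :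
    Tendsto (fun n => qPoch a q n) atTop (𝓝 (qPochInf a q)) :=
  (multipliable_one_sub a q hq).hasProd.tendsto_prod_nat



lemma exp_le_one_sub {x : ℝ} (h0 : 0 ≤ x) (h1 : x < 1) :
    Real.exp (-(x / (1 - x))) ≤ 1 - x := by
  have h1x : 0 < 1 - x := by linarith
  rw [Real.exp_neg, inv_le_comm₀ (Real.exp_pos _) h1x]
  have : (1 - x)⁻¹ = x / (1 - x) + 1 := by field_simp; ring
  rw [this]
  exact Real.add_one_le_exp _

lemma sum_pow_le (q : ℂ) (hq : ‖q‖ < 1) (n : ℕ) :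
    ∑ j ∈ Finset.range n, ‖q‖ ^ (j + 1)
      ≤ ‖q‖ / (1 - ‖q‖) := by
  have hr0 : 0 ≤ ‖q‖ := norm_nonneg q
  have hsum : Summable (fun j : ℕ => ‖q‖ ^ (j + 1)) := by
    simpa [pow_succ'] using (summable_geometric_of_lt_one hr0 hq).mul_left (‖q‖)
  have := Summable.sum_le_tsum (Finset.range n) (fun j _ => pow_nonneg hr0 (j + 1)) hsum
  refine this.trans ?_
  have : ∑' j : ℕ, ‖q‖ ^ (j + 1)
      = ‖q‖ * ∑' j : ℕ, ‖q‖ ^ j := by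
    rw [← tsum_mul_left]; congr 1; ext j; rw [pow_succ']
  rw [this, tsum_geometric_of_lt_one hr0 hq, div_eq_mul_inv]

lemma abs_qPoch_le (q : ℂ) (hq : ‖q‖ < 1) (n : ℕ) :
    ‖qPoch q q n‖ ≤ Real.exp (‖q‖ / (1 - ‖q‖)) := by
  have hr0 : 0 ≤ ‖q‖ := norm_nonneg q
  rw [qPoch, norm_prod]
  calc ∏ j ∈ Finset.range n, ‖1 - q * q ^ j‖
      ≤ ∏ j ∈ Finset.range n, Real.exp (‖q‖ ^ (j + 1)) := by
        refine Finset.prod_le_prod (fun j _ => norm_nonneg _) (fun j _ => ?_)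
        have h1 : ‖1 - q * q ^ j‖ ≤ 1 + ‖q‖ ^ (j + 1) := by
          calc ‖1 - q * q ^ j‖ ≤ ‖1‖ + ‖q * q ^ j‖ :=
                norm_sub_le 1 (q * q ^ j)
            _ = 1 + ‖q‖ ^ (j + 1) := by simp [map_mul, map_pow, pow_succ']
        exact h1.trans (by linarith [Real.add_one_le_exp (‖q‖ ^ (j + 1))])
    _ = Real.exp (∑ j ∈ Finset.range n, ‖q‖ ^ (j + 1)) := (Real.exp_sum _ _).symm
    _ ≤ _ := Real.exp_le_exp.mpr (sum_pow_le q hq n)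

lemma abs_qPoch_ge (q : ℂ) (hq : ‖q‖ < 1) (n : ℕ) :
    Real.exp (-(‖q‖ / ((1 - ‖q‖) * (1 - ‖q‖))))
      ≤ ‖qPoch q q n‖ := by
  have hr0 : 0 ≤ ‖q‖ := norm_nonneg q
  have h1r : 0 < 1 - ‖q‖ := by linarith
  rw [qPoch, norm_prod]
  have key : ∀ j ∈ Finset.range n,
      Real.exp (-(‖q‖ ^ (j + 1) / (1 - ‖q‖)))
        ≤ ‖1 - q * q ^ j‖ := by
    intro j _
    have hrj : ‖q‖ ^ (j + 1) ≤ ‖q‖ := by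
      calc ‖q‖ ^ (j + 1) ≤ ‖q‖ ^ 1 :=
            pow_le_pow_of_le_one hr0 hq.le (by omega)
        _ = ‖q‖ := pow_one _
    have hrj1 : ‖q‖ ^ (j + 1) < 1 := lt_of_le_of_lt hrj hq
    have hrj0 : 0 ≤ ‖q‖ ^ (j + 1) := pow_nonneg hr0 _
    have step1 : Real.exp (-(‖q‖ ^ (j + 1) / (1 - ‖q‖)))
        ≤ Real.exp (-(‖q‖ ^ (j + 1) / (1 - ‖q‖ ^ (j + 1)))) := by
      apply Real.exp_le_exp.mpr
      apply neg_le_neg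
      apply div_le_div_of_nonneg_left hrj0 (by linarith) (by linarith)
    refine step1.trans ((exp_le_one_sub hrj0 hrj1).trans ?_)
    calc 1 - ‖q‖ ^ (j + 1) = ‖(1:ℂ)‖ - ‖q * q ^ j‖ := by
          simp [map_mul, map_pow, pow_succ']
      _ ≤ ‖(1:ℂ) - q * q ^ j‖ := norm_sub_norm_le 1 (q * q ^ j)
      _ = ‖1 - q * q ^ j‖ := rfl
  calc Real.exp (-(‖q‖ / ((1 - ‖q‖) * (1 - ‖q‖))))
      ≤ Real.exp (-(∑ j ∈ Finset.range n, ‖q‖ ^ (j + 1)) / (1 - ‖q‖)) := by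
        apply Real.exp_le_exp.mpr
        rw [neg_div]
        apply neg_le_neg
        rw [div_le_div_iff₀ h1r (by positivity)]
        calc (∑ j ∈ Finset.range n, ‖q‖ ^ (j+1)) * ((1-‖q‖)*(1-‖q‖))
            ≤ (‖q‖ / (1 - ‖q‖)) * ((1-‖q‖)*(1-‖q‖)) := by
              apply mul_le_mul_of_nonneg_right (sum_pow_le q hq n) (by positivity)
          _ = ‖q‖ * (1 - ‖q‖) := by field_simp
    _ = ∏ j ∈ Finset.range n, Real.exp (-(‖q‖ ^ (j + 1) / (1 - ‖q‖))) := by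
        rw [← Real.exp_sum]; congr 1
        rw [neg_div, Finset.sum_div, ← Finset.sum_neg_distrib]
    _ ≤ _ := Finset.prod_le_prod (fun j _ => (Real.exp_pos _).le) key




noncomputable def gb (q : ℂ) (m k : ℕ) : ℂ :=
  if k ≤ m then qPoch q q m / (qPoch q q k * qPoch q q (m - k)) else 0

lemma qPoch_succ (a q : ℂ) (n : ℕ) :
    qPoch a q (n + 1) = qPoch a q n * (1 - a * q ^ n) := Finset.prod_range_succ _ _

lemma qPoch_qq_ne_zero {q : ℂ} (hq : ‖q‖ < 1) (n : ℕ) : qPoch q q n ≠ 0 := by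
  rw [qPoch]
  apply Finset.prod_ne_zero_iff.mpr
  intro j _
  intro h
  have h1 : q * q ^ j = 1 := by linear_combination -h
  have : ‖q * q ^ j‖ < 1 := by
    rw [norm_mul, norm_pow]
    calc ‖q‖ * ‖q‖ ^ j ≤ ‖q‖ * 1 := by
          apply mul_le_mul_of_nonneg_left _ (norm_nonneg q)
          exact pow_le_one₀ (norm_nonneg q) hq.le
      _ < 1 := by rwa [mul_one]
  rw [h1] at this; simp at this

lemma gb_zero (q : ℂ) {hq : ‖q‖ < 1} (m : ℕ) : gb q m 0 = 1 := by
  rw [gb, if_pos (Nat.zero_le m)]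
  simp [qPoch, div_self (qPoch_qq_ne_zero hq m)]
  exact qPoch_qq_ne_zero hq m

lemma gb_self (q : ℂ) {hq : ‖q‖ < 1} (m : ℕ) : gb q m m = 1 := by
  rw [gb, if_pos le_rfl]
  simp [qPoch]
  exact qPoch_qq_ne_zero hq m

lemma gb_top (q : ℂ) (m : ℕ) : gb q m (m + 1) = 0 := by
  rw [gb, if_neg (by omega)]

lemma gb_pascal {q : ℂ} (hq : ‖q‖ < 1) {m k : ℕ} (hk : k ≤ m) :
    gb q (m + 1) (k + 1) = q ^ (k + 1) * gb q m (k + 1) + gb q m k := by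
  rcases eq_or_lt_of_le hk with rfl | hlt
  · rw [gb_self q (hq := hq), gb_top, gb_self q (hq := hq)]
    ring
  · obtain ⟨d, rfl⟩ : ∃ d, m = k + 1 + d := ⟨m - (k + 1), by omega⟩
    rw [gb, if_pos (by omega), gb, if_pos (by omega), gb, if_pos (by omega)]
    rw [show k + 1 + d + 1 - (k + 1) = d + 1 from by omega,
        show k + 1 + d - (k + 1) = d from by omega,
        show k + 1 + d - k = d + 1 from by omega]
    have e1 : qPoch q q (k + 1 + d + 1) = qPoch q q (k + 1 + d) * (1 - q * q ^ (k + 1 + d)) :=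
      qPoch_succ q q _
    have e2 : qPoch q q (d + 1) = qPoch q q d * (1 - q * q ^ d) := qPoch_succ q q _
    have e3 : qPoch q q (k + 1) = qPoch q q k * (1 - q * q ^ k) := qPoch_succ q q _
    rw [e1, e2, e3]
    have h1 := qPoch_qq_ne_zero hq (k + 1 + d)
    have h2 := qPoch_qq_ne_zero hq d
    have h3 := qPoch_qq_ne_zero hq k
    have h4 : (1 - q * q ^ d) ≠ 0 := by
      have := qPoch_qq_ne_zero hq (d + 1); rw [e2] at this
      exact fun h => this (by rw [h, mul_zero])
    have h5 : (1 - q * q ^ k) ≠ 0 := by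
      have := qPoch_qq_ne_zero hq (k + 1); rw [e3] at this
      exact fun h => this (by rw [h, mul_zero])
    field_simp
    ring

lemma choose_two_succ (k : ℕ) : (k + 1).choose 2 = k.choose 2 + k := by
  rw [Nat.choose_succ_succ, Nat.choose_one_right]; exact Nat.add_comm _ _

theorem qbinom {q : ℂ} (hq : ‖q‖ < 1) (x : ℂ) (m : ℕ) :
    ∏ j ∈ Finset.range m, (1 + x * q ^ j)
      = ∑ k ∈ Finset.range (m + 1), gb q m k * q ^ (k.choose 2) * x ^ k := by
  induction m generalizing x with
  | zero => simp [gb_zero q (hq := hq)]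
  | succ m ih =>
    set g : ℕ → ℂ := fun k => gb q m k * q ^ (k.choose 2) * q ^ k * x ^ k with hg
    have hT : ∑ k ∈ Finset.range (m + 1), gb q m k * q ^ (k.choose 2) * (x * q) ^ k
        = ∑ k ∈ Finset.range (m + 1), g k := by
      apply Finset.sum_congr rfl; intro k _
      rw [hg]; simp only [mul_pow]; ring
    have lhs_eq : ∏ j ∈ Finset.range (m + 1), (1 + x * q ^ j)
        = (∑ k ∈ Finset.range (m + 1), g k) * (1 + x) := by
      rw [Finset.prod_range_succ']
      have : ∀ j, 1 + x * q ^ (j + 1) = 1 + (x * q) * q ^ j := by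
        intro j; ring
      rw [Finset.prod_congr rfl (fun j _ => this j), ih (x * q)]
      simp only [pow_zero, mul_one, hT]
    rw [lhs_eq]
    have key : ∀ k ∈ Finset.range (m + 1),
        gb q (m + 1) (k + 1) * q ^ ((k + 1).choose 2) * x ^ (k + 1)
          = g (k + 1) + x * g k := by
      intro k hk
      rw [Finset.mem_range] at hk
      rw [gb_pascal hq (by omega), hg]
      simp only [choose_two_succ]
      ring
    have rhs_eq : ∑ k ∈ Finset.range (m + 1 + 1), gb q (m + 1) k * q ^ (k.choose 2) * x ^ k
        = (∑ k ∈ Finset.range (m + 1), g k) * (1 + x) := by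
      rw [Finset.sum_range_succ' (fun k => gb q (m + 1) k * q ^ (k.choose 2) * x ^ k) (m + 1)]
      rw [Finset.sum_congr rfl key, Finset.sum_add_distrib]
      have hz : gb q (m+1) 0 * q ^ (Nat.choose 0 2) * x ^ 0 = g 0 := by
        simp [hg, gb_zero q (hq := hq)]
      have h1 : ∑ k ∈ Finset.range (m + 1), g (k + 1) + g 0
          = ∑ k ∈ Finset.range (m + 1), g k := by
        rw [← Finset.sum_range_succ' g (m + 1), Finset.sum_range_succ]
        have : g (m + 1) = 0 := by rw [hg]; simp [gb_top]
        rw [this, add_zero]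
      have h2 : ∑ k ∈ Finset.range (m + 1), x * g k = x * ∑ k ∈ Finset.range (m + 1), g k :=
        (Finset.mul_sum _ _ _).symm
      rw [hz, add_assoc, add_comm (∑ k ∈ Finset.range (m + 1), x * g k) (g 0), ← add_assoc,
        h1, h2]
      ring
    rw [rhs_eq]

lemma choose2_cast (k : ℕ) : 2 * ((k.choose 2 : ℤ)) = (k : ℤ) * ((k : ℤ) - 1) := by
  induction k with
  | zero => simp
  | succ k ih =>
    rw [choose_two_succ]
    push_cast
    push_cast at ih
    linarith [ih]

theorem finite_jtp {q z : ℂ} (hq0 : q ≠ 0) (hq : ‖q‖ < 1) (hz : z ≠ 0) (n : ℕ) :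
    qPoch (-z) q n * qPoch (-q / z) q n
      = ∑ k ∈ Finset.range (2 * n + 1),
          gb q (2 * n) k * q ^ (((k : ℤ) - n) * ((k : ℤ) - n - 1) / 2) * z ^ ((k : ℤ) - n) := by
  set M : ℕ := ∑ j ∈ Finset.range n, (j + 1) with hM
  have hqn : (q : ℂ) ^ n ≠ 0 := pow_ne_zero n hq0
  -- Gauss: 2*M = n*(n+1) over ℤ
  have h2M : (2 * M : ℤ) = (n : ℤ) * ((n : ℤ) + 1) := by
    have hg : (∑ i ∈ Finset.range n, i) * 2 = n * (n - 1) := Finset.sum_range_id_mul_two n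
    have hMn : M = (∑ i ∈ Finset.range n, i) + n := by
      rw [hM, Finset.sum_add_distrib, Finset.sum_const, Finset.card_range, smul_eq_mul, mul_one]
    cases n with
    | zero => norm_num [hMn]
    | succ m =>
      have : (m + 1) * (m + 1 - 1) = (m + 1) * m := by simp
      rw [this] at hg
      have : (M : ℤ) = ((∑ i ∈ Finset.range (m+1), i : ℕ) : ℤ) + (m + 1 : ℕ) := by
        exact_mod_cast congrArg (Nat.cast : ℕ → ℤ) hMn
      push_cast at this ⊢
      have hgz : ((∑ i ∈ Finset.range (m+1), i : ℕ) : ℤ) * 2 = ((m : ℤ) + 1) * m := by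
        exact_mod_cast congrArg (Nat.cast : ℕ → ℤ) hg
      linarith
  -- the qbinom instance at x = z / q^n, m = 2n
  have hqb := qbinom hq (z / q ^ n) (2 * n)
  -- split LHS product
  have hsplit : ∏ j ∈ Finset.range (2 * n), (1 + z / q ^ n * q ^ j)
      = (∏ j ∈ Finset.range n, (1 + z / q ^ n * q ^ j)) * qPoch (-z) q n := by
    rw [two_mul, Finset.prod_range_add]
    congr 1
    rw [qPoch]
    apply Finset.prod_congr rfl
    intro i _
    rw [pow_add]
    field_simp
    ring
  -- first half
  have hfirst : ∏ j ∈ Finset.range n, (1 + z / q ^ n * q ^ j)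
      = z ^ n / q ^ M * qPoch (-q / z) q n := by
    have step : ∀ j ∈ Finset.range n,
        (1 + z / q ^ n * q ^ j) = z * (1 + q ^ (n - j) / z) / q ^ (n - j) := by
      intro j hj
      rw [Finset.mem_range] at hj
      have hnj : n - j + j = n := by omega
      have : (q : ℂ) ^ n = q ^ (n - j) * q ^ j := by rw [← pow_add, hnj]
      rw [this]
      have hqnj : (q : ℂ) ^ (n - j) ≠ 0 := pow_ne_zero _ hq0
      have hqj : (q : ℂ) ^ j ≠ 0 := pow_ne_zero _ hq0
      field_simp
      ring
    rw [Finset.prod_congr rfl step]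
    rw [Finset.prod_div_distrib, Finset.prod_mul_distrib, Finset.prod_const,
      Finset.card_range]
    have hrefl : ∏ j ∈ Finset.range n, (1 + q ^ (n - j) / z)
        = qPoch (-q / z) q n := by
      have ha : ∏ j ∈ Finset.range n, (1 + q ^ (n - j) / z)
          = ∏ j ∈ Finset.range n, (1 + q ^ (j + 1) / z) := by
        rw [← Finset.prod_range_reflect (fun j => 1 + q ^ (j + 1) / z) n]
        apply Finset.prod_congr rfl
        intro j hj
        rw [Finset.mem_range] at hj
        rw [show n - 1 - j + 1 = n - j from by omega]
      rw [ha, qPoch]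
      apply Finset.prod_congr rfl
      intro j _
      rw [pow_succ']
      field_simp
      ring
    have hprodq : ∏ j ∈ Finset.range n, (q : ℂ) ^ (n - j) = q ^ M := by
      have ha : ∏ j ∈ Finset.range n, (q : ℂ) ^ (n - j)
          = ∏ j ∈ Finset.range n, (q : ℂ) ^ (j + 1) := by
        rw [← Finset.prod_range_reflect (fun j => (q : ℂ) ^ (j + 1)) n]
        apply Finset.prod_congr rfl
        intro j hj
        rw [Finset.mem_range] at hj
        rw [show n - 1 - j + 1 = n - j from by omega]
      rw [ha, Finset.prod_pow_eq_pow_sum]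
    rw [hrefl, hprodq]
    ring
  -- per-term transformation
  have hterm : ∀ k ∈ Finset.range (2 * n + 1),
      q ^ M / z ^ n * (gb q (2 * n) k * q ^ (k.choose 2) * (z / q ^ n) ^ k)
        = gb q (2 * n) k * q ^ (((k : ℤ) - n) * ((k : ℤ) - n - 1) / 2)
            * z ^ ((k : ℤ) - n) := by
    intro k _
    have he : ((k : ℤ) - n) * ((k : ℤ) - n - 1) / 2
        = (k.choose 2 : ℤ) - (n : ℤ) * k + (M : ℤ) := by
      have h2 : ((k : ℤ) - n) * ((k : ℤ) - n - 1)
          = 2 * ((k.choose 2 : ℤ) - (n : ℤ) * k + (M : ℤ)) := by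
        linear_combination - choose2_cast k - h2M
      rw [h2, Int.mul_ediv_cancel_left _ two_ne_zero]
    rw [he]
    rw [zpow_add₀ hq0, zpow_sub₀ hq0, ← Nat.cast_mul, zpow_natCast, zpow_natCast, zpow_natCast]
    rw [zpow_sub₀ hz, zpow_natCast, zpow_natCast]
    rw [div_pow, ← pow_mul]
    have h1 : (q : ℂ) ^ (n * k) ≠ 0 := pow_ne_zero _ hq0
    have h2 : (q : ℂ) ^ M ≠ 0 := pow_ne_zero _ hq0
    have h3 : (z : ℂ) ^ n ≠ 0 := pow_ne_zero _ hz
    field_simp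
  -- assemble
  calc qPoch (-z) q n * qPoch (-q / z) q n
      = q ^ M / z ^ n * ((z ^ n / q ^ M * qPoch (-q / z) q n) * qPoch (-z) q n) := by
        have h2 : (q : ℂ) ^ M ≠ 0 := pow_ne_zero _ hq0
        have h3 : (z : ℂ) ^ n ≠ 0 := pow_ne_zero _ hz
        field_simp
    _ = q ^ M / z ^ n * ∑ k ∈ Finset.range (2 * n + 1),
          gb q (2 * n) k * q ^ (k.choose 2) * (z / q ^ n) ^ k := by
        rw [← hfirst, ← hsplit, hqb]
    _ = ∑ k ∈ Finset.range (2 * n + 1),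
          q ^ M / z ^ n * (gb q (2 * n) k * q ^ (k.choose 2) * (z / q ^ n) ^ k) := by
        rw [Finset.mul_sum]
    _ = _ := Finset.sum_congr rfl hterm


lemma E_eq {m c : ℤ} (h : m * (m - 1) = 2 * c) : m * (m - 1) / 2 = c := by
  rw [h, Int.mul_ediv_cancel_left _ two_ne_zero]

lemma E_succ (m : ℤ) : (m + 1) * (m + 1 - 1) / 2 = m * (m - 1) / 2 + m := by
  obtain ⟨c, hc⟩ := Int.even_mul_succ_self (m - 1)
  have h1 : m * (m - 1) = 2 * c := by linear_combination hc
  have h2 : (m + 1) * (m + 1 - 1) = 2 * (c + m) := by linear_combination hc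
  rw [h1, h2, Int.mul_ediv_cancel_left _ two_ne_zero, Int.mul_ediv_cancel_left _ two_ne_zero]

lemma summable_aux {r t : ℝ} (hr0 : 0 < r) (hr : r < 1) (ht : 0 < t) (c : ℕ → ℤ)
    (hc : ∀ k, ∃ d : ℕ, k ≤ d ∧ c (k + 1) = c k + d) :
    Summable (fun k : ℕ => r ^ (c k) * t ^ k) := by
  apply summable_of_ratio_norm_eventually_le (by norm_num : (1:ℝ)/2 < 1)
  have h0 : Tendsto (fun k : ℕ => r ^ k * t) atTop (𝓝 0) := by
    simpa using (tendsto_pow_atTop_nhds_zero_of_lt_one hr0.le hr).mul_const t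
  filter_upwards [h0.eventually_le_const (by norm_num : (0:ℝ) < 1/2)] with k hk
  obtain ⟨d, hkd, hcd⟩ := hc k
  have hpos : ∀ j : ℕ, (0:ℝ) ≤ r ^ (c j) * t ^ j := fun j => by positivity
  rw [Real.norm_of_nonneg (hpos _), Real.norm_of_nonneg (hpos _)]
  rw [hcd, zpow_add₀ hr0.ne', zpow_natCast, pow_succ]
  have hrd : r ^ d ≤ r ^ k := pow_le_pow_of_le_one hr0.le hr.le hkd
  calc r ^ c k * r ^ d * (t ^ k * t) = (r ^ d * t) * (r ^ c k * t ^ k) := by ring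
    _ ≤ (r ^ k * t) * (r ^ c k * t ^ k) := by
        apply mul_le_mul_of_nonneg_right _ (hpos k)
        exact mul_le_mul_of_nonneg_right hrd ht.le
    _ ≤ 1/2 * (r ^ c k * t ^ k) := mul_le_mul_of_nonneg_right hk (hpos k)

lemma summable_theta {r s : ℝ} (hr0 : 0 < r) (hr : r < 1) (hs : 0 < s) :
    Summable (fun m : ℤ => r ^ (m * (m - 1) / 2) * s ^ m) := by
  apply Summable.of_nat_of_neg
  · have := summable_aux hr0 hr hs (fun k : ℕ => ((k:ℤ) * ((k:ℤ) - 1) / 2)) ?_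
    · refine this.congr fun k => ?_
      rw [zpow_natCast]
    · intro k
      refine ⟨k, le_rfl, ?_⟩
      have := E_succ (k : ℤ)
      push_cast
      omega
  · have := summable_aux hr0 hr (inv_pos.mpr hs) (fun k : ℕ => ((-k:ℤ) * ((-k:ℤ) - 1) / 2)) ?_
    · refine this.congr fun k => ?_
      rw [zpow_neg, zpow_natCast, inv_pow]
    · intro k
      refine ⟨k + 1, by omega, ?_⟩
      obtain ⟨c, hc⟩ := Int.even_mul_succ_self (k : ℤ)
      have h1 : (-(k:ℤ)) * (-(k:ℤ) - 1) / 2 = c := E_eq (by linear_combination hc)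
      have h2 : (-(k:ℤ) - 1) * (-(k:ℤ) - 1 - 1) / 2 = c + (k + 1) :=
        E_eq (by linear_combination hc)
      push_cast
      push_cast at h1 h2
      ring_nf at h1 h2 ⊢
      omega

theorem jacobi_triple_product (q z : ℂ) (hq0 : q ≠ 0) (hq : ‖q‖ < 1) (hz : z ≠ 0) :
    ∑' k : ℤ, q ^ (k * (k - 1) / 2) * z ^ k
      = qPochInf q q * qPochInf (-z) q * qPochInf (-q / z) q := by
  have hr0 : 0 < ‖q‖ := norm_pos_iff.mpr hq0
  have hz0 : 0 < ‖z‖ := norm_pos_iff.mpr hz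
  set r := ‖q‖ with hr
  set δ : ℝ := Real.exp (-(r / ((1 - r) * (1 - r)))) with hδdef
  have hδ : 0 < δ := Real.exp_pos _
  set Kq : ℝ := Real.exp (r / (1 - r)) with hKq
  set K : ℝ := Kq / (δ * δ) with hK
  have hK0 : 0 < K := by positivity
  -- uniform bound on Gaussian binomials
  have hgb : ∀ m k, ‖gb q m k‖ ≤ K := by
    intro m k
    rw [gb]
    split
    · rw [norm_div, norm_mul]
      apply div_le_div₀ (Real.exp_pos _).le (abs_qPoch_le q hq m) (by positivity)
      exact mul_le_mul (abs_qPoch_ge q hq k) (abs_qPoch_ge q hq (m - k)) hδ.le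
        (norm_nonneg _)
    · simpa using hK0.le
  -- limit of qPoch q q
  set Pinf : ℂ := qPochInf q q with hPinf
  have htP : Tendsto (fun n => qPoch q q n) atTop (𝓝 Pinf) := tendsto_qPoch q q hq
  have hPabs : δ ≤ ‖Pinf‖ :=
    ge_of_tendsto' ((continuous_norm.tendsto Pinf).comp htP)
      (fun n => abs_qPoch_ge q hq n)
  have hPinf0 : Pinf ≠ 0 := by
    intro h
    rw [h] at hPabs
    simp at hPabs
    linarith
  -- the doubly-indexed family
  set fc : ℕ → ℤ → ℂ := fun n m =>
    if -(n:ℤ) ≤ m ∧ m ≤ (n:ℤ) then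
      gb q (2*n) (m + n).toNat * q ^ (m * (m - 1) / 2) * z ^ m
    else 0 with hfc
  -- tsum of fc equals the finite product
  have hfin : ∀ n : ℕ, ∑' m : ℤ, fc n m = qPoch (-z) q n * qPoch (-q / z) q n := by
    intro n
    rw [finite_jtp hq0 hq hz n]
    rw [tsum_eq_sum (s := Finset.Icc (-(n:ℤ)) (n:ℤ))
      (fun m hm => by
        rw [Finset.mem_Icc] at hm
        exact if_neg hm)]
    apply Finset.sum_bij' (i := fun (m : ℤ) (_ : m ∈ Finset.Icc (-(n:ℤ)) (n:ℤ)) => (m + n).toNat)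
      (j := fun (k : ℕ) (_ : k ∈ Finset.range (2*n+1)) => (k : ℤ) - n)
    · intro m hm
      rw [Finset.mem_Icc] at hm
      rw [Finset.mem_range]
      omega
    · intro k hk
      rw [Finset.mem_range] at hk
      rw [Finset.mem_Icc]
      omega
    · intro m hm
      rw [Finset.mem_Icc] at hm
      omega
    · intro k hk
      rw [Finset.mem_range] at hk
      omega
    · intro m hm
      rw [Finset.mem_Icc] at hm
      rw [hfc]
      simp only [if_pos hm]
      rw [show ((((m + n).toNat : ℤ)) - n) = m from by omega]
  -- the dominating bound
  set bound : ℤ → ℝ := fun m => K * (r ^ (m * (m - 1) / 2) * ‖z‖ ^ m) with hbd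
  have hbound : ∀ n m, ‖fc n m‖ ≤ bound m := by
    intro n m
    simp only [hfc, hbd]
    split
    · rw [norm_mul, norm_mul, norm_zpow, norm_zpow]
      have h1 : ‖gb q (2 * n) (m + ↑n).toNat‖ * ‖q‖ ^ (m * (m - 1) / 2)
            * ‖z‖ ^ m
          = ‖gb q (2 * n) (m + ↑n).toNat‖
            * (r ^ (m * (m - 1) / 2) * ‖z‖ ^ m) := by
        rw [hr]; ring
      rw [h1]
      exact mul_le_mul_of_nonneg_right (hgb _ _) (by positivity)
    · simp only [norm_zero]
      positivity
  have hbsumm : Summable bound := (summable_theta hr0 hq hz0).mul_left K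
  -- pointwise limits
  have hptwise : ∀ m : ℤ, Tendsto (fun n => fc n m) atTop
      (𝓝 (Pinf⁻¹ * (q ^ (m * (m - 1) / 2) * z ^ m))) := by
    intro m
    have h2n : Tendsto (fun n : ℕ => 2 * n) atTop atTop := by
      rw [tendsto_atTop_atTop]
      intro b
      exact ⟨b, fun n hn => by omega⟩
    have hmn : Tendsto (fun n : ℕ => (m + n).toNat) atTop atTop := by
      rw [tendsto_atTop_atTop]
      intro b
      exact ⟨b + m.natAbs, fun n hn => by omega⟩
    have hnm : Tendsto (fun n : ℕ => ((n : ℤ) - m).toNat) atTop atTop := by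
      rw [tendsto_atTop_atTop]
      intro b
      exact ⟨b + m.natAbs, fun n hn => by omega⟩
    have hexpr : Tendsto (fun n : ℕ =>
        qPoch q q (2*n) / (qPoch q q ((m + n).toNat) * qPoch q q (((n:ℤ) - m).toNat))
          * (q ^ (m * (m - 1) / 2) * z ^ m)) atTop
        (𝓝 (Pinf / (Pinf * Pinf) * (q ^ (m * (m - 1) / 2) * z ^ m))) := by
      apply Tendsto.mul_const
      exact Tendsto.div (htP.comp h2n) ((htP.comp hmn).mul (htP.comp hnm))
        (mul_ne_zero hPinf0 hPinf0)
    have hPP : Pinf / (Pinf * Pinf) = Pinf⁻¹ := by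
      field_simp
    rw [hPP] at hexpr
    apply hexpr.congr'
    filter_upwards [eventually_ge_atTop m.natAbs] with n hn
    have hm1 : -(n:ℤ) ≤ m ∧ m ≤ (n:ℤ) := by omega
    rw [hfc]
    simp only [if_pos hm1]
    rw [gb, if_pos (show (m + n).toNat ≤ 2 * n by omega),
      show 2 * n - (m + n).toNat = ((n:ℤ) - m).toNat from by omega]
    ring
  -- Tannery
  have htann := tendsto_tsum_of_dominated_convergence (𝓕 := atTop) hbsumm hptwise
    (Eventually.of_forall (fun n m => hbound n m))
  have hprodlim : Tendsto (fun n => ∑' m : ℤ, fc n m) atTop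
      (𝓝 (qPochInf (-z) q * qPochInf (-q / z) q)) := by
    have := (tendsto_qPoch (-z) q hq).mul (tendsto_qPoch (-q / z) q hq)
    exact this.congr (fun n => (hfin n).symm)
  have huniq : qPochInf (-z) q * qPochInf (-q / z) q
      = ∑' m : ℤ, Pinf⁻¹ * (q ^ (m * (m - 1) / 2) * z ^ m) :=
    tendsto_nhds_unique hprodlim htann
  rw [tsum_mul_left] at huniq
  have hfinal : ∑' m : ℤ, q ^ (m * (m - 1) / 2) * z ^ m
      = Pinf * (qPochInf (-z) q * qPochInf (-q / z) q) := by
    rw [huniq]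
    field_simp
  rw [hfinal, hPinf]
  ring
end

section
/- Heine's first transformation: for $|q|<1$, $|z|<1$, $|b|<1$, and $c$ not of the form $q^{-n}$, $\sum_{k=0}^\infty \frac{(a;q)_k (b;q)_k}{(c;q)_k (q;q)_k} z^k = \frac{(b;q)_\infty (az;q)_\infty}{(c;q)_\infty (z;q)_\infty} \sum_{k=0}^\infty \frac{(c/b;q)_k (z;q)_k}{(az;q)_k (q;q)_k} b^k$. -/
namespace HeineAux

open Complex Finset Filter Topology

variable {q : ℂ}

lemma qPoch_succ (x q : ℂ) (n : ℕ) : qPoch x q (n + 1) = qPoch x q n * (1 - x * q ^ n) := by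
  simp [qPoch, Finset.prod_range_succ]

lemma summable_norm_xq (hq : ‖q‖ < 1) (x : ℂ) : Summable fun j : ℕ => ‖x * q ^ j‖ := by
  simpa [norm_mul, norm_pow] using
    (summable_geometric_of_lt_one (norm_nonneg q) hq).mul_left ‖x‖

lemma tendsto_xq (hq : ‖q‖ < 1) (x : ℂ) : Tendsto (fun j : ℕ => x * q ^ j) atTop (𝓝 0) := by
  simpa using (tendsto_pow_atTop_nhds_zero_of_norm_lt_one hq).const_mul x

lemma summable_log (hq : ‖q‖ < 1) (x : ℂ) :
    Summable fun j : ℕ => Complex.log (1 - x * q ^ j) := by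
  apply Summable.of_norm_bounded_eventually (g := fun j => (3 / 2) * ‖x * q ^ j‖)
    ((summable_norm_xq hq x).mul_left _)
  rw [Nat.cofinite_eq_atTop]
  have h2 : ∀ᶠ j : ℕ in atTop, ‖x * q ^ j‖ < 1 / 2 := by
    have := (tendsto_xq hq x).norm
    simp only [norm_zero] at this
    exact this.eventually_lt_const (by norm_num)
  filter_upwards [h2] with j hj
  have := Complex.norm_log_one_add_half_le_self (z := -(x * q ^ j)) (by simpa using hj.le)
  rwa [← sub_eq_add_neg, norm_neg] at this

lemma multipliable (hq : ‖q‖ < 1) (x : ℂ) (hx : ∀ j : ℕ, 1 - x * q ^ j ≠ 0) :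
    Multipliable fun j : ℕ => 1 - x * q ^ j :=
  Complex.multipliable_of_summable_log (summable_log hq x)

lemma qPochInf_ne_zero (hq : ‖q‖ < 1) (x : ℂ) (hx : ∀ j : ℕ, 1 - x * q ^ j ≠ 0) :
    qPochInf x q ≠ 0 := by
  have := Complex.cexp_tsum_eq_tprod (f := fun j : ℕ => 1 - x * q ^ j)
    (fun j => hx j) (summable_log hq x)
  rw [qPochInf, ← this]
  exact Complex.exp_ne_zero _

lemma tendsto_qPoch (hq : ‖q‖ < 1) (x : ℂ) (hx : ∀ j : ℕ, 1 - x * q ^ j ≠ 0) :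
    Tendsto (fun n => qPoch x q n) atTop (𝓝 (qPochInf x q)) :=
  (multipliable hq x hx).hasProd.tendsto_prod_nat

lemma hne_of_lt (hq : ‖q‖ < 1) {x : ℂ} (hx : ‖x‖ < 1) (j : ℕ) : 1 - x * q ^ j ≠ 0 := by
  intro h
  have h1 : x * q ^ j = 1 := by
    have := sub_eq_zero.mp h; exact this.symm
  have : ‖x * q ^ j‖ < 1 := by
    rw [norm_mul, norm_pow]
    calc ‖x‖ * ‖q‖ ^ j ≤ ‖x‖ * 1 := by
          gcongr; exact pow_le_one₀ (norm_nonneg q) hq.le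
      _ < 1 := by simpa using hx
  rw [h1] at this; simp at this

lemma hne_of_hyp {x : ℂ} (hx : ∀ n : ℕ, x ≠ (q ^ n)⁻¹) (j : ℕ) : 1 - x * q ^ j ≠ 0 := by
  intro h
  have h1 : x * q ^ j = 1 := (sub_eq_zero.mp h).symm
  have h0 : q ^ j ≠ 0 := by
    intro h2; rw [h2, mul_zero] at h1; exact one_ne_zero h1.symm
  exact hx j (eq_inv_of_mul_eq_one_left h1)

lemma hne_shift {x : ℂ} (hx : ∀ j : ℕ, 1 - x * q ^ j ≠ 0) (n j : ℕ) :
    1 - x * q ^ n * q ^ j ≠ 0 := by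
  have := hx (n + j); rwa [pow_add, ← mul_assoc] at this

lemma qPoch_ne_zero {x : ℂ} (hx : ∀ j : ℕ, 1 - x * q ^ j ≠ 0) (k : ℕ) : qPoch x q k ≠ 0 :=
  Finset.prod_ne_zero_iff.mpr fun j _ => hx j

lemma qPochInf_shift (hq : ‖q‖ < 1) (x : ℂ) (hx : ∀ j : ℕ, 1 - x * q ^ j ≠ 0) (n : ℕ) :
    qPochInf x q = qPoch x q n * qPochInf (x * q ^ n) q := by
  have hm : Multipliable (fun j : ℕ => 1 - x * q ^ (j + n)) :=
    (multipliable hq (x * q ^ n) (hne_shift hx n)).congr fun j => by rw [pow_add]; ring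
  have h := Multipliable.prod_mul_tprod_nat_mul' (f := fun j : ℕ => 1 - x * q ^ j) (k := n) hm
  rw [qPochInf, qPoch, ← h, qPochInf]
  congr 1
  apply tprod_congr
  intro j
  simp only [pow_add]
  ring

lemma norm_qPoch_le (hq : ‖q‖ < 1) (x : ℂ) (k : ℕ) :
    ‖qPoch x q k‖ ≤ Real.exp (‖x‖ * (1 - ‖q‖)⁻¹) := by
  rw [qPoch, norm_prod]
  calc ∏ j ∈ range k, ‖1 - x * q ^ j‖
      ≤ ∏ j ∈ range k, Real.exp (‖x‖ * ‖q‖ ^ j) := by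
        apply Finset.prod_le_prod (fun j _ => norm_nonneg _)
        intro j _
        calc ‖1 - x * q ^ j‖ ≤ ‖(1 : ℂ)‖ + ‖x * q ^ j‖ := norm_sub_le _ _
          _ = 1 + ‖x‖ * ‖q‖ ^ j := by rw [norm_one, norm_mul, norm_pow]
          _ ≤ Real.exp (‖x‖ * ‖q‖ ^ j) := by
              have := Real.add_one_le_exp (‖x‖ * ‖q‖ ^ j); linarith
    _ = Real.exp (∑ j ∈ range k, ‖x‖ * ‖q‖ ^ j) := by rw [Real.exp_sum]
    _ ≤ Real.exp (‖x‖ * (1 - ‖q‖)⁻¹) := by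
        apply Real.exp_le_exp.mpr
        rw [← Finset.mul_sum]
        apply mul_le_mul_of_nonneg_left _ (norm_nonneg x)
        calc ∑ j ∈ range k, ‖q‖ ^ j
            ≤ ∑' j : ℕ, ‖q‖ ^ j :=
              Summable.sum_le_tsum _ (fun j _ => pow_nonneg (norm_nonneg q) j)
                (summable_geometric_of_lt_one (norm_nonneg q) hq)
          _ = (1 - ‖q‖)⁻¹ := tsum_geometric_of_lt_one (norm_nonneg q) hq

lemma exists_pos_forall_le (hq : ‖q‖ < 1) (x : ℂ) (hx : ∀ j : ℕ, 1 - x * q ^ j ≠ 0) :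
    ∃ δ : ℝ, 0 < δ ∧ ∀ k, δ ≤ ‖qPoch x q k‖ := by
  classical
  have hL : 0 < ‖qPochInf x q‖ := norm_pos_iff.mpr (qPochInf_ne_zero hq x hx)
  have ht := (tendsto_qPoch hq x hx).norm
  have hev : ∀ᶠ n in atTop, ‖qPochInf x q‖ / 2 < ‖qPoch x q n‖ :=
    ht.eventually_const_lt (half_lt_self hL)
  obtain ⟨N, hN⟩ := eventually_atTop.mp hev
  set S : Finset ℝ := insert (‖qPochInf x q‖ / 2) ((Finset.range N).image fun k => ‖qPoch x q k‖)
    with hS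
  have hSne : S.Nonempty := ⟨_, Finset.mem_insert_self _ _⟩
  refine ⟨S.min' hSne, ?_, ?_⟩
  · have hmem := S.min'_mem hSne
    rcases Finset.mem_insert.mp hmem with h | h
    · rw [h]; positivity
    · obtain ⟨k, _, hk⟩ := Finset.mem_image.mp h
      rw [← hk]
      exact norm_pos_iff.mpr (qPoch_ne_zero hx k)
  · intro k
    by_cases hk : k < N
    · exact S.min'_le _ (Finset.mem_insert_of_mem
        (Finset.mem_image_of_mem _ (Finset.mem_range.mpr hk)))
    · exact le_trans (S.min'_le _ (Finset.mem_insert_self _ _)) (hN k (not_lt.mp hk)).le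

lemma summable_bound {f : ℕ → ℂ} {M : ℝ} (hM : ∀ k, ‖f k‖ ≤ M) {w : ℂ} (hw : ‖w‖ < 1) :
    Summable fun k => f k * w ^ k := by
  apply Summable.of_norm_bounded (g := fun k => M * ‖w‖ ^ k)
    ((summable_geometric_of_lt_one (norm_nonneg w) hw).mul_left M)
  intro k
  rw [norm_mul, norm_pow]
  exact mul_le_mul_of_nonneg_right (hM k) (by positivity)

section qbinom

lemma qbinom_mul (hq : ‖q‖ < 1) (a z : ℂ) (hz : ‖z‖ < 1)
    (haz : ∀ j : ℕ, 1 - a * z * q ^ j ≠ 0) :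
    qPochInf z q * ∑' k : ℕ, qPoch a q k / qPoch q q k * z ^ k = qPochInf (a * z) q := by
  set c : ℕ → ℂ := fun k => qPoch a q k / qPoch q q k with hcdef
  have hqfac : ∀ j : ℕ, 1 - q * q ^ j ≠ 0 := fun j => hne_of_lt hq hq j
  obtain ⟨δ, hδ, hδle⟩ := exists_pos_forall_le hq q hqfac
  set M : ℝ := Real.exp (‖a‖ * (1 - ‖q‖)⁻¹) / δ with hMdef
  have hcM : ∀ k, ‖c k‖ ≤ M := by
    intro k
    rw [hcdef]
    simp only [norm_div]
    exact div_le_div₀ (Real.exp_nonneg _) (norm_qPoch_le hq a k) hδ (hδle k)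
  have hMnn : 0 ≤ M := le_trans (norm_nonneg _) (hcM 0)
  have hsum : ∀ w : ℂ, ‖w‖ < 1 → Summable fun k => c k * w ^ k := fun w hw =>
    summable_bound hcM hw
  set h : ℂ → ℂ := fun w => ∑' k, c k * w ^ k with hhdef
  -- functional equation
  have hfe : ∀ w : ℂ, ‖w‖ < 1 → (1 - w) * h w = (1 - a * w) * h (q * w) := by
    intro w hw
    have hqw : ‖q * w‖ < 1 := by
      rw [norm_mul]
      calc ‖q‖ * ‖w‖ ≤ ‖q‖ * 1 := mul_le_mul_of_nonneg_left hw.le (norm_nonneg q)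
        _ < 1 := by simpa using hq
    have hs1 := hsum w hw
    have hs2 := hsum (q * w) hqw
    have hu : Summable fun k => c k * (1 - q ^ k) * w ^ k :=
      (hs1.sub hs2).congr fun k => by rw [mul_pow]; ring
    have hv : Summable fun k => c k * (1 - a * q ^ k) * (w * w ^ k) :=
      ((hs1.mul_left w).sub (hs2.mul_left (a * w))).congr fun k => by rw [mul_pow]; ring
    have e1 : (1 - w) * h w - (1 - a * w) * h (q * w)
        = ∑' k, (c k * (1 - q ^ k) * w ^ k - c k * (1 - a * q ^ k) * (w * w ^ k)) := by
      rw [hhdef]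
      simp only
      rw [← tsum_mul_left, ← tsum_mul_left, ← Summable.tsum_sub (hs1.mul_left _) (hs2.mul_left _)]
      apply tsum_congr
      intro k
      rw [mul_pow]; ring
    have e2 : ∑' k, c k * (1 - q ^ k) * w ^ k = ∑' k, c k * (1 - a * q ^ k) * (w * w ^ k) := by
      rw [Summable.tsum_eq_zero_add hu]
      simp only [pow_zero, sub_self, mul_zero, zero_mul, zero_add]
      apply tsum_congr
      intro k
      have hqq : qPoch q q (k + 1) = qPoch q q k * (1 - q ^ (k + 1)) := by
        rw [qPoch_succ, ← pow_succ']
      have haa : qPoch a q (k + 1) = qPoch a q k * (1 - a * q ^ k) := qPoch_succ a q k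
      have h1 : qPoch q q k ≠ 0 := qPoch_ne_zero hqfac k
      have h3 : (1 - q ^ (k + 1)) ≠ 0 := by have := hqfac k; rwa [← pow_succ'] at this
      rw [hcdef]
      simp only
      rw [haa, hqq]
      field_simp
      ring
    have e3 : (1 - w) * h w - (1 - a * w) * h (q * w) = 0 := by
      rw [e1, Summable.tsum_sub hu hv, e2, sub_self]
    exact sub_eq_zero.mp e3
  -- iteration
  have hiter : ∀ n : ℕ, qPoch z q n * h z = qPoch (a * z) q n * h (q ^ n * z) := by
    intro n
    induction n with
    | zero => simp [qPoch]
    | succ n ih =>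
      have hzn : ‖q ^ n * z‖ < 1 := by
        rw [norm_mul, norm_pow]
        calc ‖q‖ ^ n * ‖z‖ ≤ 1 * ‖z‖ := by
              gcongr; exact pow_le_one₀ (norm_nonneg q) hq.le
          _ < 1 := by simpa using hz
      have hfe' := hfe (q ^ n * z) hzn
      rw [qPoch_succ, qPoch_succ]
      calc qPoch z q n * (1 - z * q ^ n) * h z
          = (1 - z * q ^ n) * (qPoch z q n * h z) := by ring
        _ = (1 - z * q ^ n) * (qPoch (a * z) q n * h (q ^ n * z)) := by rw [ih]
        _ = qPoch (a * z) q n * ((1 - q ^ n * z) * h (q ^ n * z)) := by ring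
        _ = qPoch (a * z) q n * ((1 - a * (q ^ n * z)) * h (q * (q ^ n * z))) := by rw [hfe']
        _ = qPoch (a * z) q n * (1 - a * z * q ^ n) * h (q ^ (n + 1) * z) := by
            rw [pow_succ']; ring_nf
  -- limit of h (q^n z)
  have hzero : qPoch a q 0 / qPoch q q 0 = 1 := by simp [qPoch]
  have hbound : ∀ w : ℂ, ‖w‖ ≤ ‖z‖ → ‖h w - 1‖ ≤ M * (1 - ‖z‖)⁻¹ * ‖w‖ := by
    intro w hw
    have hw1 : ‖w‖ < 1 := lt_of_le_of_lt hw hz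
    have hsw := hsum w hw1
    have hsplit : h w - 1 = ∑' k, c (k + 1) * w ^ (k + 1) := by
      rw [hhdef]
      simp only
      rw [Summable.tsum_eq_zero_add hsw]
      rw [hcdef]
      simp only
      rw [hzero]
      simp
    rw [hsplit]
    have hsn : Summable fun k : ℕ => M * ‖w‖ * ‖w‖ ^ k :=
      (summable_geometric_of_lt_one (norm_nonneg w) hw1).mul_left _
    calc ‖∑' k, c (k + 1) * w ^ (k + 1)‖ ≤ ∑' k, ‖c (k + 1) * w ^ (k + 1)‖ := by
          apply norm_tsum_le_tsum_norm
          apply Summable.of_nonneg_of_le (fun k => norm_nonneg _) _ hsn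
          intro k
          rw [norm_mul, norm_pow, pow_succ]
          calc ‖c (k + 1)‖ * (‖w‖ ^ k * ‖w‖) ≤ M * (‖w‖ ^ k * ‖w‖) := by
                apply mul_le_mul_of_nonneg_right (hcM _) (by positivity)
            _ = M * ‖w‖ * ‖w‖ ^ k := by ring
      _ ≤ ∑' k : ℕ, M * ‖w‖ * ‖w‖ ^ k := by
          apply Summable.tsum_le_tsum _ _ hsn
          · intro k
            rw [norm_mul, norm_pow, pow_succ]
            calc ‖c (k + 1)‖ * (‖w‖ ^ k * ‖w‖) ≤ M * (‖w‖ ^ k * ‖w‖) := by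
                  apply mul_le_mul_of_nonneg_right (hcM _) (by positivity)
              _ = M * ‖w‖ * ‖w‖ ^ k := by ring
          · apply Summable.of_nonneg_of_le (fun k => norm_nonneg _) _ hsn
            intro k
            rw [norm_mul, norm_pow, pow_succ]
            calc ‖c (k + 1)‖ * (‖w‖ ^ k * ‖w‖) ≤ M * (‖w‖ ^ k * ‖w‖) := by
                  apply mul_le_mul_of_nonneg_right (hcM _) (by positivity)
              _ = M * ‖w‖ * ‖w‖ ^ k := by ring
      _ = M * ‖w‖ * (1 - ‖w‖)⁻¹ := by
          rw [tsum_mul_left, tsum_geometric_of_lt_one (norm_nonneg w) hw1]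
      _ ≤ M * (1 - ‖z‖)⁻¹ * ‖w‖ := by
          have h2 : (1 - ‖w‖)⁻¹ ≤ (1 - ‖z‖)⁻¹ := by
            rw [inv_le_inv₀ (by linarith) (by linarith)]
            linarith
          calc M * ‖w‖ * (1 - ‖w‖)⁻¹ ≤ M * ‖w‖ * (1 - ‖z‖)⁻¹ :=
                mul_le_mul_of_nonneg_left h2 (by positivity)
            _ = M * (1 - ‖z‖)⁻¹ * ‖w‖ := by ring
  have hlimh : Tendsto (fun n => h (q ^ n * z)) atTop (𝓝 1) := by
    rw [tendsto_iff_norm_sub_tendsto_zero]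
    apply squeeze_zero (fun n => norm_nonneg _)
      (g := fun n => M * (1 - ‖z‖)⁻¹ * ‖z‖ * ‖q‖ ^ n)
    · intro n
      have : ‖q ^ n * z‖ ≤ ‖z‖ := by
        rw [norm_mul, norm_pow]
        calc ‖q‖ ^ n * ‖z‖ ≤ 1 * ‖z‖ := by
              gcongr; exact pow_le_one₀ (norm_nonneg q) hq.le
          _ = ‖z‖ := one_mul _
      calc ‖h (q ^ n * z) - 1‖ ≤ M * (1 - ‖z‖)⁻¹ * ‖q ^ n * z‖ := hbound _ this
        _ = M * (1 - ‖z‖)⁻¹ * ‖z‖ * ‖q‖ ^ n := by rw [norm_mul, norm_pow]; ring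
    · have : Tendsto (fun n : ℕ => ‖q‖ ^ n) atTop (𝓝 0) :=
        tendsto_pow_atTop_nhds_zero_of_lt_one (norm_nonneg q) hq
      simpa using this.const_mul (M * (1 - ‖z‖)⁻¹ * ‖z‖)
  have hlim1 : Tendsto (fun n => qPoch z q n * h z) atTop (𝓝 (qPochInf z q * h z)) :=
    (tendsto_qPoch hq z (hne_of_lt hq hz)).mul_const _
  have hlim2 : Tendsto (fun n => qPoch (a * z) q n * h (q ^ n * z)) atTop
      (𝓝 (qPochInf (a * z) q * 1)) :=
    (tendsto_qPoch hq (a * z) haz).mul hlimh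
  have heq : qPochInf z q * h z = qPochInf (a * z) q * 1 := by
    apply tendsto_nhds_unique _ hlim2
    exact hlim1.congr fun n => hiter n
  simpa using heq

lemma qbinom (hq : ‖q‖ < 1) (a z : ℂ) (hz : ‖z‖ < 1) (haz : ∀ j : ℕ, 1 - a * z * q ^ j ≠ 0) :
    ∑' k : ℕ, qPoch a q k / qPoch q q k * z ^ k = qPochInf (a * z) q / qPochInf z q := by
  have h0 := qPochInf_ne_zero hq z (hne_of_lt hq hz)
  rw [eq_div_iff h0, mul_comm]
  exact qbinom_mul hq a z hz haz

end qbinom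

end HeineAux

set_option maxHeartbeats 2000000 in
open HeineAux Complex Finset Filter Topology in
theorem heine_first (a b c z q : ℂ) (hq : ‖q‖ < 1) (hz : ‖z‖ < 1)
    (hb : ‖b‖ < 1) (hb0 : b ≠ 0)
    (hc : ∀ n : ℕ, c ≠ (q ^ n)⁻¹) (haz : ∀ n : ℕ, a * z ≠ (q ^ n)⁻¹) :
    ∑' k : ℕ, qPoch a q k * qPoch b q k / (qPoch c q k * qPoch q q k) * z ^ k
      = qPochInf b q * qPochInf (a * z) q / (qPochInf c q * qPochInf z q)
        * ∑' k : ℕ, qPoch (c / b) q k * qPoch z q k / (qPoch (a * z) q k * qPoch q q k) * b ^ k := by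
  -- nonvanishing of factors
  have hfb : ∀ j : ℕ, 1 - b * q ^ j ≠ 0 := hne_of_lt hq hb
  have hfz : ∀ j : ℕ, 1 - z * q ^ j ≠ 0 := hne_of_lt hq hz
  have hfc : ∀ j : ℕ, 1 - c * q ^ j ≠ 0 := hne_of_hyp hc
  have hfaz : ∀ j : ℕ, 1 - (a * z) * q ^ j ≠ 0 := hne_of_hyp haz
  have hfq : ∀ j : ℕ, 1 - q * q ^ j ≠ 0 := hne_of_lt hq hq
  -- bounds
  obtain ⟨δ, hδ, hδle⟩ := exists_pos_forall_le hq q hfq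
  set Ma : ℝ := Real.exp (‖a‖ * (1 - ‖q‖)⁻¹) / δ with hMa
  set Mcb : ℝ := Real.exp (‖c / b‖ * (1 - ‖q‖)⁻¹) / δ with hMcb
  have hAk : ∀ k, ‖qPoch a q k / qPoch q q k‖ ≤ Ma := by
    intro k
    rw [norm_div]
    exact div_le_div₀ (Real.exp_nonneg _) (norm_qPoch_le hq a k) hδ (hδle k)
  have hBk : ∀ k, ‖qPoch (c / b) q k / qPoch q q k‖ ≤ Mcb := by
    intro k
    rw [norm_div]
    exact div_le_div₀ (Real.exp_nonneg _) (norm_qPoch_le hq (c / b) k) hδ (hδle k)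
  have hMann : 0 ≤ Ma := le_trans (norm_nonneg _) (hAk 0)
  have hMcbnn : 0 ≤ Mcb := le_trans (norm_nonneg _) (hBk 0)
  set A : ℕ → ℂ := fun k => qPoch a q k / qPoch q q k * z ^ k with hA
  set B : ℕ → ℂ := fun n => qPoch (c / b) q n / qPoch q q n * b ^ n with hB
  -- Step 1: rewrite each LHS term
  have hbqk : ∀ k : ℕ, ‖b * q ^ k‖ < 1 := by
    intro k
    rw [norm_mul, norm_pow]
    calc ‖b‖ * ‖q‖ ^ k ≤ ‖b‖ * 1 := by gcongr; exact pow_le_one₀ (norm_nonneg q) hq.le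
      _ < 1 := by simpa using hb
  have step1 : ∀ k : ℕ,
      qPoch a q k * qPoch b q k / (qPoch c q k * qPoch q q k) * z ^ k
        = qPochInf b q / qPochInf c q * (A k * ∑' n : ℕ, B n * q ^ (k * n)) := by
    intro k
    have hshift_cb : ∀ j : ℕ, 1 - c / b * (b * q ^ k) * q ^ j ≠ 0 := by
      intro j
      have : c / b * (b * q ^ k) = c * q ^ k := by field_simp
      rw [this]
      exact hne_shift hfc k j
    have hqb := qbinom hq (c / b) (b * q ^ k) (hbqk k) hshift_cb
    have hcv : c / b * (b * q ^ k) = c * q ^ k := by field_simp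
    rw [hcv] at hqb
    have hsum_eq : ∑' n : ℕ, B n * q ^ (k * n)
        = ∑' n : ℕ, qPoch (c / b) q n / qPoch q q n * (b * q ^ k) ^ n := by
      apply tsum_congr
      intro n
      rw [hB]
      simp only
      rw [mul_pow, ← pow_mul]
      ring
    have hshb := qPochInf_shift hq b hfb k
    have hshc := qPochInf_shift hq c hfc k
    have hnb := qPochInf_ne_zero hq (b * q ^ k) (hne_shift hfb k)
    have hnc := qPochInf_ne_zero hq (c * q ^ k) (hne_shift hfc k)
    have hncc := qPochInf_ne_zero hq c hfc
    have hpc : qPoch c q k ≠ 0 := qPoch_ne_zero hfc k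
    have hpq : qPoch q q k ≠ 0 := qPoch_ne_zero hfq k
    rw [hsum_eq, hqb, hA]
    simp only
    -- substitute qPoch b, qPoch c via shifts
    have hqb' : qPoch b q k = qPochInf b q / qPochInf (b * q ^ k) q := by
      rw [hshb]; field_simp
    have hqc' : qPoch c q k = qPochInf c q / qPochInf (c * q ^ k) q := by
      rw [hshc]; field_simp
    rw [hqb', hqc']
    field_simp
  rw [tsum_congr step1, tsum_mul_left]
  -- Step 2: double sum and Fubini
  have hFsum : Summable (fun p : ℕ × ℕ => A p.1 * B p.2 * q ^ (p.1 * p.2)) := by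
    apply Summable.of_norm_bounded (g := fun p : ℕ × ℕ => Ma * ‖z‖ ^ p.1 * (Mcb * ‖b‖ ^ p.2))
    · have h1 : Summable fun k : ℕ => Ma * ‖z‖ ^ k :=
        (summable_geometric_of_lt_one (norm_nonneg z) hz).mul_left Ma
      have h2 : Summable fun n : ℕ => Mcb * ‖b‖ ^ n :=
        (summable_geometric_of_lt_one (norm_nonneg b) hb).mul_left Mcb
      exact h1.mul_of_nonneg h2 (fun k => by positivity) (fun n => by positivity)
    · rintro ⟨k, n⟩
      simp only [norm_mul, norm_pow, hA, hB]
      calc ‖qPoch a q k / qPoch q q k‖ * ‖z‖ ^ k * (‖qPoch (c / b) q n / qPoch q q n‖ * ‖b‖ ^ n)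
            * ‖q‖ ^ (k * n)
          ≤ Ma * ‖z‖ ^ k * (Mcb * ‖b‖ ^ n) * 1 := by
            gcongr
            · exact hAk k
            · exact hBk n
            · exact pow_le_one₀ (norm_nonneg q) hq.le
        _ = Ma * ‖z‖ ^ k * (Mcb * ‖b‖ ^ n) := mul_one _
  have hAB : ∀ k, A k * ∑' n : ℕ, B n * q ^ (k * n) = ∑' n : ℕ, A k * B n * q ^ (k * n) := by
    intro k
    rw [← tsum_mul_left]
    apply tsum_congr
    intro n
    ring
  rw [tsum_congr hAB]
  have hfub : ∑' (k : ℕ) (n : ℕ), A k * B n * q ^ (k * n)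
      = ∑' (n : ℕ) (k : ℕ), A k * B n * q ^ (k * n) :=
    (Summable.tsum_comm (f := fun k n => A k * B n * q ^ (k * n)) hFsum).symm
  rw [hfub]
  -- Step 3: inner sum over k via q-binomial
  have hzqn : ∀ n : ℕ, ‖z * q ^ n‖ < 1 := by
    intro n
    rw [norm_mul, norm_pow]
    calc ‖z‖ * ‖q‖ ^ n ≤ ‖z‖ * 1 := by gcongr; exact pow_le_one₀ (norm_nonneg q) hq.le
      _ < 1 := by simpa using hz
  have step3 : ∀ n : ℕ, ∑' k : ℕ, A k * B n * q ^ (k * n)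
      = qPochInf (a * z) q / qPochInf z q
        * (qPoch (c / b) q n * qPoch z q n / (qPoch (a * z) q n * qPoch q q n) * b ^ n) := by
    intro n
    have hsha : ∀ j : ℕ, 1 - a * (z * q ^ n) * q ^ j ≠ 0 := by
      intro j
      have : a * (z * q ^ n) = a * z * q ^ n := by ring
      rw [this]
      exact hne_shift hfaz n j
    have hqb := qbinom hq a (z * q ^ n) (hzqn n) hsha
    have hsum_eq : ∑' k : ℕ, A k * B n * q ^ (k * n)
        = B n * ∑' k : ℕ, qPoch a q k / qPoch q q k * (z * q ^ n) ^ k := by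
      rw [← tsum_mul_left]
      apply tsum_congr
      intro k
      rw [hA]
      simp only
      rw [mul_pow, ← pow_mul, mul_comm n k]
      ring
    rw [hsum_eq, hqb]
    have hca : a * (z * q ^ n) = a * z * q ^ n := by ring
    rw [hca]
    have hshaz := qPochInf_shift hq (a * z) hfaz n
    have hshz := qPochInf_shift hq z hfz n
    have hnaz := qPochInf_ne_zero hq (a * z * q ^ n) (hne_shift hfaz n)
    have hnz := qPochInf_ne_zero hq (z * q ^ n) (hne_shift hfz n)
    have hnzz := qPochInf_ne_zero hq z hfz
    have hpaz : qPoch (a * z) q n ≠ 0 := qPoch_ne_zero hfaz n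
    have hpz : qPoch z q n ≠ 0 := qPoch_ne_zero hfz n
    have hpq : qPoch q q n ≠ 0 := qPoch_ne_zero hfq n
    have h1 : qPochInf (a * z * q ^ n) q = qPochInf (a * z) q / qPoch (a * z) q n := by
      rw [hshaz]; field_simp
    have h2 : qPochInf (z * q ^ n) q = qPochInf z q / qPoch z q n := by
      rw [hshz]; field_simp
    rw [h1, h2, hB]
    simp only
    field_simp
  rw [tsum_congr step3, tsum_mul_left]
  rw [← mul_assoc]
  congr 1
  field_simp
end
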